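/- Let M ∈ SL₂(ℂ), M ≠ ±I, and let X = v·wᵀ be a rank-one matrix with v, w ∈ ℂ² \ {0}. Then the GU₂-orbit of X is fixed by the action X ↦ MX (i.e., MX ∈ X·GU₂) if and only if v spans an eigenline of M. -/

import Mathlib

open Matrix

/-- The group of unitary similitudes: `X X* = x·I` for some `x ≠ 0`. -/
def GU2 : Set (Matrix (Fin 2) (Fin 2) ℂ) :=
  {g | ∃ x : ℂ, x ≠ 0 ∧ g * star g = x • (1 : Matrix (Fin 2) (Fin 2) ℂ)}

lemma mul_vecMulVec' (M : Matrix (Fin 2) (Fin 2) ℂ) (v w : Fin 2 → ℂ) :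
    M * Matrix.vecMulVec v w = Matrix.vecMulVec (M.mulVec v) w := by
  ext i j
  simp [Matrix.mul_apply, Matrix.vecMulVec_apply, Matrix.mulVec, dotProduct,
    Finset.sum_mul, mul_assoc]
  fin_cases i <;> simp <;> ring

lemma vecMulVec_mul' (g : Matrix (Fin 2) (Fin 2) ℂ) (v w : Fin 2 → ℂ) :
    Matrix.vecMulVec v w * g = Matrix.vecMulVec v (Matrix.vecMul w g) := by
  ext i j
  simp [Matrix.mul_apply, Matrix.vecMulVec_apply, Matrix.vecMul, dotProduct,
    Finset.mul_sum, mul_assoc]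
  ring

/-- For `M ∈ SL₂(ℂ)`, `M ≠ ±I`, and a rank-one matrix `X = v·wᵀ`
with `v, w ≠ 0`, the `GU₂`-orbit of `X` is fixed by `X ↦ MX` (i.e. `MX ∈ X·GU₂`)
iff `v` spans an eigenline of `M`. -/
theorem stmt_13 (M : Matrix (Fin 2) (Fin 2) ℂ) (hdet : M.det = 1)
    (hM1 : M ≠ 1) (hM2 : M ≠ -1)
    (v w : Fin 2 → ℂ) (hv : v ≠ 0) (hw : w ≠ 0) :
    (∃ g ∈ GU2, M * Matrix.vecMulVec v w = Matrix.vecMulVec v w * g) ↔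
      ∃ μ : ℂ, M.mulVec v = μ • v := by
  constructor
  · rintro ⟨g, -, hg⟩
    obtain ⟨j, hj⟩ := Function.ne_iff.mp hw
    replace hj : w j ≠ 0 := by simpa using hj
    refine ⟨Matrix.vecMul w g j / w j, ?_⟩
    rw [mul_vecMulVec', vecMulVec_mul'] at hg
    funext i
    have h := congrFun (congrFun hg i) j
    simp only [Matrix.vecMulVec_apply] at h
    show M.mulVec v i = Matrix.vecMul w g j / w j * v i
    rw [div_mul_eq_mul_div, eq_div_iff hj, h]
    ring
  · rintro ⟨μ, hμ⟩
    have hMunit : IsUnit M.det := by simp [hdet]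
    have hμ0 : μ ≠ 0 := by
      rintro rfl
      apply hv
      have h0 : M.mulVec v = 0 := by simpa using hμ
      have := congrArg (M⁻¹.mulVec) h0
      rwa [Matrix.mulVec_mulVec, Matrix.nonsing_inv_mul M hMunit, Matrix.one_mulVec,
        Matrix.mulVec_zero] at this
    refine ⟨μ • (1 : Matrix (Fin 2) (Fin 2) ℂ), ⟨μ * star μ, ?_, ?_⟩, ?_⟩
    · exact mul_ne_zero hμ0 (star_ne_zero.mpr hμ0)
    · simp [star_smul, smul_smul, mul_comm]
    · rw [mul_vecMulVec', hμ]
      ext i j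
      simp [Matrix.vecMulVec_apply, Matrix.mul_apply, Matrix.one_apply, mul_comm, mul_assoc,
        mul_left_comm]
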